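/- Let ψ : ℝ → ℝ be locally absolutely continuous and let S ⊆ ℝ. If the image ψ(S) has one-dimensional Lebesgue outer measure zero, then ψ'(t) = 0 for Lebesgue-almost every t ∈ S. -/

import Mathlib

open MeasureTheory Set
open scoped NNReal ENNReal

/-- On a set where `ψ` expands distances by a factor `1/K`, a null image forces a null set. -/
lemma antilip_null (ψ : ℝ → ℝ) (K : ℝ≥0) (T : Set ℝ)
    (h : ∀ x ∈ T, ∀ y ∈ T, dist x y ≤ K * dist (ψ x) (ψ y))
    (hT : volume (ψ '' T) = 0) : volume T = 0 := by
  have hanti : AntilipschitzWith K (fun x : T => ψ x) :=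
    AntilipschitzWith.of_le_mul_dist fun x y => by
      rw [Subtype.dist_eq]; exact h x x.2 y y.2
  have h1 : μH[1] (univ : Set T) ≤ (K : ℝ≥0∞) ^ (1 : ℝ) * μH[1] ((fun x : T => ψ x) '' univ) :=
    hanti.le_hausdorffMeasure_image zero_le_one univ
  have h2 : μH[1] ((Subtype.val : T → ℝ) '' univ) = μH[1] (univ : Set T) :=
    isometry_subtype_coe.hausdorffMeasure_image (Or.inl zero_le_one) _
  have h3 : (Subtype.val : T → ℝ) '' univ = T := by
    rw [image_univ, Subtype.range_coe]
  have h4 : (fun x : T => ψ x) '' univ = ψ '' T := by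
    rw [image_univ]
    ext z; simp [Set.mem_image]
  rw [h4] at h1
  have h2' : μH[1] T = μH[1] (univ : Set T) := by
    conv_lhs => rw [← h3]
    exact h2
  have h5 : μH[1] T ≤ (K : ℝ≥0∞) ^ (1 : ℝ) * μH[1] (ψ '' T) := h2'.trans_le h1
  rw [MeasureTheory.hausdorffMeasure_real] at h5
  rw [hT, mul_zero] at h5
  exact le_antisymm h5 zero_le

/-- Variation bound on a short interval from the AC modulus. -/
lemma evar_le_one (ψ : ℝ → ℝ) {a b c d δ : ℝ}
    (hsum : ∀ n : ℕ, ∀ I : Fin n → ℝ × ℝ,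
        (∀ k, a ≤ (I k).1 ∧ (I k).1 ≤ (I k).2 ∧ (I k).2 ≤ b) →
        (∀ k l, k ≠ l → Disjoint (Set.Ioo (I k).1 (I k).2) (Set.Ioo (I l).1 (I l).2)) →
        (∑ k, ((I k).2 - (I k).1)) < δ → (∑ k, |ψ (I k).2 - ψ (I k).1|) < 1)
    (hac : a ≤ c) (hdb : d ≤ b) (hcd : d - c < δ) :
    eVariationOn ψ (Set.Icc c d) ≤ 1 := by
  apply iSup_le
  rintro ⟨n, u, hu, hus⟩
  have cond : ∀ k : Fin n, a ≤ u (k : ℕ) ∧ u (k : ℕ) ≤ u ((k : ℕ) + 1) ∧ u ((k : ℕ) + 1) ≤ b :=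
    fun k => ⟨hac.trans (hus k).1, hu (Nat.le_succ _), (hus _).2.trans hdb⟩
  have disj0 : ∀ k l : Fin n, (k : ℕ) < (l : ℕ) →
      Disjoint (Set.Ioo (u (k : ℕ)) (u ((k : ℕ) + 1))) (Set.Ioo (u (l : ℕ)) (u ((l : ℕ) + 1))) := by
    intro k l hkl
    have : u ((k : ℕ) + 1) ≤ u (l : ℕ) := hu hkl
    rw [Set.disjoint_left]
    intro x hx hx'
    exact absurd (hx.2.trans_le (this.trans hx'.1.le)) (lt_irrefl x)
  have disj : ∀ k l : Fin n, k ≠ l →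
      Disjoint (Set.Ioo (u (k : ℕ)) (u ((k : ℕ) + 1))) (Set.Ioo (u (l : ℕ)) (u ((l : ℕ) + 1))) := by
    intro k l hkl
    rcases lt_or_gt_of_ne (fun h => hkl (Fin.ext h) : (k : ℕ) ≠ (l : ℕ)) with h | h
    · exact disj0 k l h
    · exact (disj0 l k h).symm
  have len : (∑ k : Fin n, (u ((k : ℕ) + 1) - u (k : ℕ))) < δ := by
    rw [Fin.sum_univ_eq_sum_range (fun i => u (i + 1) - u i) n, Finset.sum_range_sub]
    have h0 : c ≤ u 0 := (hus 0).1
    have hn : u n ≤ d := (hus n).2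
    linarith
  have key : (∑ k : Fin n, |ψ (u ((k : ℕ) + 1)) - ψ (u (k : ℕ))|) < 1 :=
    hsum n (fun k => (u (k : ℕ), u ((k : ℕ) + 1))) cond disj len
  calc (∑ i ∈ Finset.range n, edist (ψ (u (i + 1))) (ψ (u i)))
      = ∑ i ∈ Finset.range n, ENNReal.ofReal |ψ (u (i + 1)) - ψ (u i)| := by
        refine Finset.sum_congr rfl fun i _ => ?_
        rw [edist_dist, Real.dist_eq]
    _ = ENNReal.ofReal (∑ i ∈ Finset.range n, |ψ (u (i + 1)) - ψ (u i)|) :=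
        (ENNReal.ofReal_sum_of_nonneg fun i _ => abs_nonneg _).symm
    _ ≤ ENNReal.ofReal 1 := by
        apply ENNReal.ofReal_le_ofReal
        rw [← Fin.sum_univ_eq_sum_range (fun i => |ψ (u (i + 1)) - ψ (u i)|) n]
        exact key.le
    _ = 1 := ENNReal.ofReal_one

lemma locBV (ψ : ℝ → ℝ)
    (hAC : ∀ a b : ℝ, a ≤ b → ∀ ε > (0 : ℝ), ∃ δ > (0 : ℝ),
      ∀ n : ℕ, ∀ I : Fin n → ℝ × ℝ,
        (∀ k, a ≤ (I k).1 ∧ (I k).1 ≤ (I k).2 ∧ (I k).2 ≤ b) →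
        (∀ k l, k ≠ l → Disjoint (Set.Ioo (I k).1 (I k).2) (Set.Ioo (I l).1 (I l).2)) →
        (∑ k, ((I k).2 - (I k).1)) < δ →
        (∑ k, |ψ (I k).2 - ψ (I k).1|) < ε) :
    LocallyBoundedVariationOn ψ univ := by
  intro a b _ _
  rw [univ_inter, BoundedVariationOn]
  rcases le_or_gt a b with hab | hab
  · obtain ⟨δ, hδ, hsum⟩ := hAC a b hab 1 one_pos
    obtain ⟨n, hn⟩ := exists_nat_gt ((b - a) / δ)
    have hn1 : (0 : ℝ) < n + 1 := by positivity
    set h := (b - a) / (n + 1) with hh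
    have hh0 : 0 ≤ h := by
      apply div_nonneg (by linarith) hn1.le
    have hhδ : h < δ := by
      rw [hh, div_lt_iff₀ hn1]
      have : (b - a) / δ < n + 1 := hn.trans_le (by linarith)
      calc b - a = ((b - a) / δ) * δ := by field_simp
        _ < (n + 1) * δ := by exact mul_lt_mul_of_pos_right this hδ
        _ = δ * (n + 1) := by ring
    have claim : ∀ j : ℕ, j ≤ n + 1 → eVariationOn ψ (Icc a (a + j * h)) ≤ (j : ℝ≥0∞) := by
      intro j
      induction j with
      | zero =>
        intro _
        simp only [Nat.cast_zero, zero_mul, add_zero]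
        rw [Set.Icc_self]
        exact le_of_eq (eVariationOn.subsingleton ψ subsingleton_singleton)
      | succ j ih =>
        intro hj
        have ihj := ih (by omega)
        have e1 : a ≤ a + j * h := by nlinarith [Nat.cast_nonneg (α := ℝ) j]
        have e2 : a + (j : ℝ) * h ≤ a + ((j : ℕ) + 1 : ℕ) * h := by
          push_cast; nlinarith
        have key := eVariationOn.Icc_add_Icc ψ (s := univ) e1 e2 (mem_univ _)
        simp only [univ_inter] at key
        rw [← key]
        have small : eVariationOn ψ (Icc (a + j * h) (a + ((j : ℕ) + 1 : ℕ) * h)) ≤ 1 := by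
          apply evar_le_one ψ hsum e1 _ (by push_cast; linarith)
          have hj' : ((j : ℝ) + 1) ≤ (n : ℝ) + 1 := by exact_mod_cast hj
          have : a + ((j : ℝ) + 1) * h ≤ a + ((n : ℝ) + 1) * h := by nlinarith
          have hb : a + ((n : ℝ) + 1) * h = b := by
            rw [hh]; field_simp; ring
          push_cast
          linarith [this, hb.le]
        calc eVariationOn ψ (Icc a (a + j * h)) +
              eVariationOn ψ (Icc (a + j * h) (a + ((j : ℕ) + 1 : ℕ) * h))
            ≤ (j : ℝ≥0∞) + 1 := add_le_add ihj small
          _ = ((j + 1 : ℕ) : ℝ≥0∞) := by push_cast; ring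
    have final := claim (n + 1) le_rfl
    have hb : a + ((n + 1 : ℕ) : ℝ) * h = b := by
      push_cast; rw [hh]; field_simp; ring
    rw [hb] at final
    exact (final.trans_lt (ENNReal.natCast_lt_top _)).ne
  · rw [Set.Icc_eq_empty hab.not_ge]
    exact (eVariationOn.subsingleton ψ subsingleton_empty).trans_ne (by simp)

/-- If `ψ : ℝ → ℝ` is locally absolutely continuous (absolutely continuous on every compact
interval, in the classical ε-δ sense) and `S ⊆ ℝ` is such that the image `ψ(S)` has
one-dimensional Lebesgue (outer) measure zero, then for Lebesgue-a.e. `t ∈ S` the derivative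
`ψ'(t)` exists and equals `0`. -/
theorem deriv_zero_ae_of_image_null (ψ : ℝ → ℝ)
    (hAC : ∀ a b : ℝ, a ≤ b → ∀ ε > (0 : ℝ), ∃ δ > (0 : ℝ),
      ∀ n : ℕ, ∀ I : Fin n → ℝ × ℝ,
        (∀ k, a ≤ (I k).1 ∧ (I k).1 ≤ (I k).2 ∧ (I k).2 ≤ b) →
        (∀ k l, k ≠ l → Disjoint (Set.Ioo (I k).1 (I k).2) (Set.Ioo (I l).1 (I l).2)) →
        (∑ k, ((I k).2 - (I k).1)) < δ →
        (∑ k, |ψ (I k).2 - ψ (I k).1|) < ε)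
    (S : Set ℝ) (hS : volume (ψ '' S) = 0) :
    ∀ᵐ t : ℝ, t ∈ S → HasDerivAt ψ 0 t := by
  have hdiff : ∀ᵐ t : ℝ, DifferentiableAt ℝ ψ t := (locBV ψ hAC).ae_differentiableAt
  -- the "expanding" sets
  set A : ℕ → ℕ → Set ℝ := fun m q =>
    {t | t ∈ S ∧ ∀ y : ℝ, |y - t| ≤ 1 / ((q : ℝ) + 1) →
      |y - t| ≤ 2 * ((m : ℝ) + 1) * |ψ y - ψ t|} with hA
  set T : ℕ → ℕ → ℤ → Set ℝ := fun m q j =>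
    A m q ∩ Icc ((j : ℝ) / ((q : ℝ) + 1)) (((j : ℝ) + 1) / ((q : ℝ) + 1)) with hT
  have hq1 : ∀ q : ℕ, (0 : ℝ) < (q : ℝ) + 1 := fun q => by positivity
  have hTnull : ∀ (m q : ℕ) (j : ℤ), volume (T m q j) = 0 := by
    intro m q j
    refine antilip_null ψ ⟨2 * ((m : ℝ) + 1), by positivity⟩ (T m q j) ?_ ?_
    · intro x hx y hy
      have hxy : |y - x| ≤ 1 / ((q : ℝ) + 1) := by
        have := Real.dist_le_of_mem_Icc hy.2 hx.2
        rw [Real.dist_eq] at this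
        refine this.trans ?_
        rw [div_sub_div_same]
        apply le_of_eq; congr 1; ring
      have := hx.1.2 y hxy
      rw [Real.dist_eq, Real.dist_eq]
      calc |x - y| = |y - x| := abs_sub_comm _ _
        _ ≤ 2 * ((m : ℝ) + 1) * |ψ y - ψ x| := this
        _ = 2 * ((m : ℝ) + 1) * |ψ x - ψ y| := by rw [abs_sub_comm]
    · refine measure_mono_null (image_mono (f := ψ) ?_) hS
      intro x hx
      exact hx.1.1
  have hNnull : volume (⋃ (m : ℕ) (q : ℕ) (j : ℤ), T m q j) = 0 :=
    measure_iUnion_null fun m => measure_iUnion_null fun q => measure_iUnion_null fun j =>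
      hTnull m q j
  have hae : ∀ᵐ t : ℝ, t ∉ ⋃ (m : ℕ) (q : ℕ) (j : ℤ), T m q j :=
    (measure_eq_zero_iff_ae_notMem.1 hNnull)
  filter_upwards [hdiff, hae] with t ht htN htS
  by_cases hd : deriv ψ t = 0
  · have := ht.hasDerivAt
    rwa [hd] at this
  -- otherwise, t belongs to some T m q j, contradiction
  exfalso
  apply htN
  have hc : 0 < |deriv ψ t| := abs_pos.2 hd
  obtain ⟨m, hm⟩ := exists_nat_one_div_lt hc
  -- from differentiability, an expanding neighborhood
  have hlo := hasDerivAt_iff_isLittleO.1 ht.hasDerivAt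
  have hev := (Asymptotics.isLittleO_iff.1 hlo) (half_pos hc)
  rw [Metric.eventually_nhds_iff] at hev
  obtain ⟨r, hr, hball⟩ := hev
  obtain ⟨q, hq⟩ := exists_nat_one_div_lt hr
  have htA : t ∈ A m q := by
    refine ⟨htS, fun y hy => ?_⟩
    have hyr : dist y t < r := by
      rw [Real.dist_eq]; exact hy.trans_lt hq
    have hb := hball hyr
    simp only [smul_eq_mul, Real.norm_eq_abs] at hb
    have habs : |(y - t) * deriv ψ t| - |ψ y - ψ t| ≤ |deriv ψ t| / 2 * |y - t| := by
      have h1 : |(y - t) * deriv ψ t| - |ψ y - ψ t| ≤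
          |(y - t) * deriv ψ t - (ψ y - ψ t)| := abs_sub_abs_le_abs_sub _ _
      have h2 : |(y - t) * deriv ψ t - (ψ y - ψ t)| = |ψ y - ψ t - (y - t) * deriv ψ t| := by
        rw [abs_sub_comm]
      linarith [h1, h2 ▸ h1, hb]
    have hmul : |(y - t) * deriv ψ t| = |y - t| * |deriv ψ t| := abs_mul _ _
    have hlow : |deriv ψ t| / 2 * |y - t| ≤ |ψ y - ψ t| := by nlinarith [abs_nonneg (y - t)]
    have hm' : 1 < |deriv ψ t| * ((m : ℝ) + 1) := by
      rw [div_lt_iff₀ (by positivity : (0:ℝ) < (m : ℝ) + 1)] at hm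
      linarith
    nlinarith [abs_nonneg (y - t), abs_nonneg (ψ y - ψ t), hq1 q]
  refine mem_iUnion.2 ⟨m, mem_iUnion.2 ⟨q, mem_iUnion.2 ⟨⌊t * ((q : ℝ) + 1)⌋, htA, ?_, ?_⟩⟩⟩
  · rw [div_le_iff₀ (hq1 q)]
    exact Int.floor_le _
  · rw [le_div_iff₀ (hq1 q)]
    exact (Int.lt_floor_add_one _).le
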